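/- Perturbed linear system bound: let A, A_S be positive definite d×d matrices with (1−ε)A ⪯ A_S ⪯ (1+ε)A for some ε ∈ (0, 1/2), and let b, b_S ∈ ℝ^d with ‖b_S − b‖_{A^{-1}} ≤ ε·C. If θ* = A^{-1} b, θ̂ = A_S^{-1} b_S, and ‖θ*‖_A ≤ C, then ‖θ̂ − θ*‖_A ≤ 4εC. -/

import Mathlib

open Matrix

section PerturbAux

variable {d : ℕ}

private lemma symm_dot {M : Matrix (Fin d) (Fin d) ℝ} (hM : M.IsHermitian) (x y : Fin d → ℝ) :
    x ⬝ᵥ M *ᵥ y = y ⬝ᵥ M *ᵥ x := by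
  have ht : Mᵀ = M := by simpa using (congrArg Matrix.transpose hM.eq).symm
  rw [dotProduct_mulVec, ← mulVec_transpose, ht, dotProduct_comm]

private lemma qnn {M : Matrix (Fin d) (Fin d) ℝ} (hM : M.PosSemidef) (x : Fin d → ℝ) :
    0 ≤ x ⬝ᵥ M *ᵥ x := by simpa using hM.dotProduct_mulVec_nonneg x

private lemma expand_dot {M : Matrix (Fin d) (Fin d) ℝ} (hM : M.IsHermitian)
    (x y : Fin d → ℝ) (t : ℝ) :
    (x + t • y) ⬝ᵥ M *ᵥ (x + t • y)
      = x ⬝ᵥ M *ᵥ x + 2 * t * (x ⬝ᵥ M *ᵥ y) + t * t * (y ⬝ᵥ M *ᵥ y) := by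
  simp [mulVec_add, mulVec_smul, add_dotProduct, dotProduct_add, dotProduct_smul,
    smul_dotProduct, smul_eq_mul, symm_dot hM y x]
  ring

private lemma cs_sq {M : Matrix (Fin d) (Fin d) ℝ} (hM : M.PosSemidef) (x y : Fin d → ℝ) :
    (x ⬝ᵥ M *ᵥ y) ^ 2 ≤ (x ⬝ᵥ M *ᵥ x) * (y ⬝ᵥ M *ᵥ y) := by
  have h : ∀ t : ℝ, 0 ≤ (y ⬝ᵥ M *ᵥ y) * (t * t) + (2 * (x ⬝ᵥ M *ᵥ y)) * t + x ⬝ᵥ M *ᵥ x := by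
    intro t
    have := qnn hM (x + t • y)
    rw [expand_dot hM.1 x y t] at this
    linarith
  have hd := discrim_le_zero h
  rw [discrim] at hd
  nlinarith [hd]

private lemma cs {M : Matrix (Fin d) (Fin d) ℝ} (hM : M.PosSemidef) (x y : Fin d → ℝ) :
    x ⬝ᵥ M *ᵥ y ≤ Real.sqrt (x ⬝ᵥ M *ᵥ x) * Real.sqrt (y ⬝ᵥ M *ᵥ y) := by
  calc x ⬝ᵥ M *ᵥ y ≤ |x ⬝ᵥ M *ᵥ y| := le_abs_self _
    _ = Real.sqrt ((x ⬝ᵥ M *ᵥ y) ^ 2) := (Real.sqrt_sq_eq_abs _).symm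
    _ ≤ Real.sqrt ((x ⬝ᵥ M *ᵥ x) * (y ⬝ᵥ M *ᵥ y)) := Real.sqrt_le_sqrt (cs_sq hM x y)
    _ = _ := Real.sqrt_mul (qnn hM x) _

private lemma tri {M : Matrix (Fin d) (Fin d) ℝ} (hM : M.PosSemidef) (x y : Fin d → ℝ) :
    Real.sqrt ((x + y) ⬝ᵥ M *ᵥ (x + y))
      ≤ Real.sqrt (x ⬝ᵥ M *ᵥ x) + Real.sqrt (y ⬝ᵥ M *ᵥ y) := by
  have hx := Real.sq_sqrt (qnn hM x)
  have hy := Real.sq_sqrt (qnn hM y)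
  have hcs := cs hM x y
  have hexp := expand_dot hM.1 x y 1
  simp only [one_smul, one_mul, mul_one] at hexp
  have hb : (x + y) ⬝ᵥ M *ᵥ (x + y)
      ≤ (Real.sqrt (x ⬝ᵥ M *ᵥ x) + Real.sqrt (y ⬝ᵥ M *ᵥ y)) ^ 2 := by nlinarith
  calc Real.sqrt ((x + y) ⬝ᵥ M *ᵥ (x + y))
      ≤ Real.sqrt ((Real.sqrt (x ⬝ᵥ M *ᵥ x) + Real.sqrt (y ⬝ᵥ M *ᵥ y)) ^ 2) :=
        Real.sqrt_le_sqrt hb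
    _ = _ := Real.sqrt_sq (by positivity)

private lemma bil {A D : Matrix (Fin d) (Fin d) ℝ} (hA : A.IsHermitian) (hD : D.IsHermitian)
    (ε : ℝ)
    (hup : ∀ z : Fin d → ℝ, z ⬝ᵥ D *ᵥ z ≤ ε * (z ⬝ᵥ A *ᵥ z))
    (hdn : ∀ z : Fin d → ℝ, -(ε * (z ⬝ᵥ A *ᵥ z)) ≤ z ⬝ᵥ D *ᵥ z)
    (x y : Fin d → ℝ) :
    x ⬝ᵥ D *ᵥ y ≤ ε / 2 * (x ⬝ᵥ A *ᵥ x + y ⬝ᵥ A *ᵥ y) := by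
  have e1 : (x + y) ⬝ᵥ D *ᵥ (x + y)
      = x ⬝ᵥ D *ᵥ x + 2 * (x ⬝ᵥ D *ᵥ y) + y ⬝ᵥ D *ᵥ y := by
    simp [mulVec_add, add_dotProduct, dotProduct_add, symm_dot hD y x]; ring
  have e2 : (x - y) ⬝ᵥ D *ᵥ (x - y)
      = x ⬝ᵥ D *ᵥ x - 2 * (x ⬝ᵥ D *ᵥ y) + y ⬝ᵥ D *ᵥ y := by
    simp [mulVec_sub, sub_dotProduct, dotProduct_sub, symm_dot hD y x]; ring
  have a1 : (x + y) ⬝ᵥ A *ᵥ (x + y)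
      = x ⬝ᵥ A *ᵥ x + 2 * (x ⬝ᵥ A *ᵥ y) + y ⬝ᵥ A *ᵥ y := by
    simp [mulVec_add, add_dotProduct, dotProduct_add, symm_dot hA y x]; ring
  have a2 : (x - y) ⬝ᵥ A *ᵥ (x - y)
      = x ⬝ᵥ A *ᵥ x - 2 * (x ⬝ᵥ A *ᵥ y) + y ⬝ᵥ A *ᵥ y := by
    simp [mulVec_sub, sub_dotProduct, dotProduct_sub, symm_dot hA y x]; ring
  have h1 := hup (x + y)
  have h2 := hdn (x - y)
  rw [e1, a1] at h1
  rw [e2, a2] at h2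
  linarith

/-- Key operator-type bound: if `-εA ⪯ D ⪯ εA` (as quadratic forms) then
`‖D w‖_{A⁻¹} ≤ ε ‖w‖_A`. -/
private lemma opbound {A D : Matrix (Fin d) (Fin d) ℝ} (hA : A.PosDef) (hD : D.IsHermitian)
    {ε : ℝ} (hε : 0 < ε)
    (hup : ∀ z : Fin d → ℝ, z ⬝ᵥ D *ᵥ z ≤ ε * (z ⬝ᵥ A *ᵥ z))
    (hdn : ∀ z : Fin d → ℝ, -(ε * (z ⬝ᵥ A *ᵥ z)) ≤ z ⬝ᵥ D *ᵥ z)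
    (w : Fin d → ℝ) :
    Real.sqrt ((D *ᵥ w) ⬝ᵥ A⁻¹ *ᵥ (D *ᵥ w)) ≤ ε * Real.sqrt (w ⬝ᵥ A *ᵥ w) := by
  have hAinv : (A⁻¹).PosDef := hA.inv
  have hAunit : IsUnit A.det := isUnit_iff_ne_zero.2 (ne_of_gt hA.det_pos)
  set u := D *ᵥ w with hu
  set v := A⁻¹ *ᵥ u with hv
  have hAv : A *ᵥ v = u := by
    rw [hv, mulVec_mulVec, mul_nonsing_inv _ hAunit, one_mulVec]
  set s2 := u ⬝ᵥ A⁻¹ *ᵥ u with hs2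
  have hs2n : 0 ≤ s2 := qnn hAinv.posSemidef u
  set s := Real.sqrt s2 with hs
  set nw := Real.sqrt (w ⬝ᵥ A *ᵥ w) with hnw
  have hnwn : 0 ≤ nw := Real.sqrt_nonneg _
  have hsn : 0 ≤ s := Real.sqrt_nonneg _
  by_cases hs0 : s2 = 0
  · rw [hs, hs0, Real.sqrt_zero]; positivity
  have hspos : 0 < s := Real.sqrt_pos.2 (lt_of_le_of_ne hs2n (Ne.symm hs0))
  have hw0 : w ≠ 0 := by
    rintro rfl
    apply hs0
    rw [hs2, hu]
    simp
  have hnwpos : 0 < nw := by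
    rw [hnw]
    exact Real.sqrt_pos.2 (by simpa using hA.dotProduct_mulVec_pos hw0)
  have hvAv : v ⬝ᵥ A *ᵥ v = s2 := by
    rw [hAv, hs2, hv, dotProduct_comm]
  have hwDv : w ⬝ᵥ D *ᵥ v = s2 := by
    rw [symm_dot hD w v, ← hu, hs2, hv, dotProduct_comm]
  have hnw2 : w ⬝ᵥ A *ᵥ w = nw ^ 2 := (Real.sq_sqrt (qnn hA.posSemidef w)).symm
  have hs2eq : s2 = s ^ 2 := (Real.sq_sqrt hs2n).symm
  have happ := bil hA.1 hD ε hup hdn (s • w) (nw • v)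
  simp only [smul_dotProduct, mulVec_smul, dotProduct_smul, smul_eq_mul] at happ
  rw [hwDv, hvAv, hnw2, hs2eq] at happ
  nlinarith [happ, mul_pos hspos hnwpos, mul_pos (mul_pos hspos hspos) hnwpos,
    sq_nonneg (s - ε * nw)]

end PerturbAux

/-- Perturbed linear system bound: spectral sandwich plus right-hand-side closeness
give ‖θ̂ − θ*‖_A ≤ 4εC. -/
theorem perturbed_system_bound (d : ℕ)
    (A AS : Matrix (Fin d) (Fin d) ℝ) (hA : A.PosDef) (hAS : AS.PosDef)
    (ε : ℝ) (hε0 : 0 < ε) (hε1 : ε < 1/2)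
    (hlow : (AS - (1 - ε) • A).PosSemidef)
    (hhigh : ((1 + ε) • A - AS).PosSemidef)
    (b bS : Fin d → ℝ) (C : ℝ) (hC : 0 ≤ C)
    (hb : Real.sqrt ((bS - b) ⬝ᵥ A⁻¹ *ᵥ (bS - b)) ≤ ε * C)
    (θstar θhat : Fin d → ℝ)
    (hθstar : θstar = A⁻¹ *ᵥ b) (hθhat : θhat = AS⁻¹ *ᵥ bS)
    (hnorm : Real.sqrt (θstar ⬝ᵥ A *ᵥ θstar) ≤ C) :
    Real.sqrt ((θhat - θstar) ⬝ᵥ A *ᵥ (θhat - θstar)) ≤ 4 * ε * C := by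
  have hAunit : IsUnit A.det := isUnit_iff_ne_zero.2 (ne_of_gt hA.det_pos)
  have hASunit : IsUnit AS.det := isUnit_iff_ne_zero.2 (ne_of_gt hAS.det_pos)
  have hAinv : (A⁻¹).PosDef := hA.inv
  have hAeq : A *ᵥ θstar = b := by
    rw [hθstar, mulVec_mulVec, mul_nonsing_inv _ hAunit, one_mulVec]
  have hASeq : AS *ᵥ θhat = bS := by
    rw [hθhat, mulVec_mulVec, mul_nonsing_inv _ hASunit, one_mulVec]
  set D := A - AS with hD
  have hDh : D.IsHermitian := hA.1.sub hAS.1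
  set e := θhat - θstar with he
  set r := (bS - b) + D *ᵥ θstar with hr
  have hASe : AS *ᵥ e = r := by
    rw [he, hr, hD, mulVec_sub, sub_mulVec, hASeq, hAeq]
    abel
  -- quadratic-form sandwich for D
  have hup : ∀ z : Fin d → ℝ, z ⬝ᵥ D *ᵥ z ≤ ε * (z ⬝ᵥ A *ᵥ z) := by
    intro z
    have := qnn hlow z
    simp only [sub_mulVec, smul_mulVec, dotProduct_sub, dotProduct_smul,
      smul_eq_mul, hD, sub_mulVec] at this ⊢
    linarith
  have hdn : ∀ z : Fin d → ℝ, -(ε * (z ⬝ᵥ A *ᵥ z)) ≤ z ⬝ᵥ D *ᵥ z := by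
    intro z
    have := qnn hhigh z
    simp only [sub_mulVec, smul_mulVec, dotProduct_sub, dotProduct_smul,
      smul_eq_mul, hD, sub_mulVec] at this ⊢
    linarith
  -- norms
  set q := Real.sqrt (e ⬝ᵥ A *ᵥ e) with hq
  have hqn : 0 ≤ q := Real.sqrt_nonneg _
  have hq2 : e ⬝ᵥ A *ᵥ e = q ^ 2 := (Real.sq_sqrt (qnn hA.posSemidef e)).symm
  -- (1-ε) q^2 ≤ e ⬝ AS e
  have hlow' : (1 - ε) * (e ⬝ᵥ A *ᵥ e) ≤ e ⬝ᵥ AS *ᵥ e := by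
    have := qnn hlow e
    simp only [sub_mulVec, smul_mulVec, dotProduct_sub, dotProduct_smul,
      smul_eq_mul] at this
    linarith
  -- e ⬝ AS e = e ⬝ r ≤ q * ‖r‖_{A⁻¹}
  have hcs : e ⬝ᵥ r ≤ q * Real.sqrt (r ⬝ᵥ A⁻¹ *ᵥ r) := by
    have hrv : A *ᵥ (A⁻¹ *ᵥ r) = r := by
      rw [mulVec_mulVec, mul_nonsing_inv _ hAunit, one_mulVec]
    have h1 : e ⬝ᵥ r = e ⬝ᵥ A *ᵥ (A⁻¹ *ᵥ r) := by rw [hrv]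
    have h2 := cs hA.posSemidef e (A⁻¹ *ᵥ r)
    have h3 : (A⁻¹ *ᵥ r) ⬝ᵥ A *ᵥ (A⁻¹ *ᵥ r) = r ⬝ᵥ A⁻¹ *ᵥ r := by
      rw [hrv, dotProduct_comm]
    rw [h3] at h2
    rw [h1]
    exact h2
  -- ‖r‖_{A⁻¹} ≤ 2 ε C
  have hrbound : Real.sqrt (r ⬝ᵥ A⁻¹ *ᵥ r) ≤ 2 * ε * C := by
    have htri := tri hAinv.posSemidef (bS - b) (D *ᵥ θstar)
    have hop := opbound hA hDh hε0 hup hdn θstar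
    have hop' : Real.sqrt ((D *ᵥ θstar) ⬝ᵥ A⁻¹ *ᵥ (D *ᵥ θstar)) ≤ ε * C :=
      hop.trans (mul_le_mul_of_nonneg_left hnorm (le_of_lt hε0))
    rw [← hr] at htri
    linarith
  -- combine
  have hmain : (1 - ε) * q ^ 2 ≤ q * (2 * ε * C) := by
    calc (1 - ε) * q ^ 2 = (1 - ε) * (e ⬝ᵥ A *ᵥ e) := by rw [hq2]
      _ ≤ e ⬝ᵥ AS *ᵥ e := hlow'
      _ = e ⬝ᵥ r := by rw [hASe]
      _ ≤ q * Real.sqrt (r ⬝ᵥ A⁻¹ *ᵥ r) := hcs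
      _ ≤ q * (2 * ε * C) := by
          exact mul_le_mul_of_nonneg_left hrbound hqn
  rcases eq_or_lt_of_le hqn with hq0 | hqpos
  · rw [← hq0]; positivity
  · nlinarith [hmain, hqpos, sq_nonneg q, mul_pos hqpos hqpos]
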